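/- Let 0 = k_0 < k_1 < … < k_p < k_{p+1} = n be integers with n_j = k_j − k_{j−1}, and let a_1 > a_2 > … > a_{p+1} be reals. Let A ∈ ℝ^{n×n}, let (A + Aᵀ)/2 = Q Λ Qᵀ be an eigenvalue decomposition with Q ∈ O(n) and Λ = diag(λ_1,…,λ_n), λ_1 ≥ … ≥ λ_n, and let c ∈ ℝ^n be the vector whose first n_1 entries equal a_1, next n_2 entries equal a_2, and so on. Then the maximum of tr(AᵀX) over X ∈ Flag(k_1,…,k_p,n) equals Σ_{i=1}^n λ_i c_i, and it is attained at X = Q · diag(a_1 I_{n_1}, a_2 I_{n_2}, …, a_{p+1} I_{n_{p+1}}) · Qᵀ. -/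

import Mathlib

open Matrix

section aux
variable {n : ℕ}

lemma aux_block (p n : ℕ) (k : Fin (p + 2) → ℕ) (hk0 : k 0 = 0)
    (hkn : k (Fin.last (p + 1)) = n) (i : Fin n) :
    ∃ j : Fin (p + 1), k j.castSucc ≤ (i : ℕ) ∧ (i : ℕ) < k j.succ := by
  classical
  set S : Finset (Fin (p+2)) := Finset.univ.filter (fun m => (i : ℕ) < k m) with hS
  have hne : S.Nonempty := ⟨Fin.last (p+1), by simp [hS, hkn, i.isLt]⟩
  set m := S.min' hne with hm
  have hmS : m ∈ S := S.min'_mem hne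
  have hm0 : m ≠ 0 := by
    intro h
    have : (i : ℕ) < k m := by simpa [hS] using hmS
    rw [h, hk0] at this; omega
  obtain ⟨j, hj⟩ := Fin.exists_succ_eq.2 hm0
  rw [← hj] at hmS hm
  refine ⟨j, ?_, by simpa [hS] using hmS⟩
  by_contra h
  push_neg at h
  have : j.castSucc ∈ S := by simp [hS, h]
  have := S.min'_le _ this
  have hlt : j.castSucc < j.succ := Fin.castSucc_lt_succ
  rw [← hm] at this
  exact absurd (lt_of_le_of_lt this hlt) (lt_irrefl _)

lemma aux_ds_le (lam c : Fin n → ℝ) (hlam : Antitone lam) (hcua : Antitone c)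
    (M : Matrix (Fin n) (Fin n) ℝ) (hM : M ∈ doublyStochastic ℝ (Fin n)) :
    ∑ i, ∑ j, lam i * c j * M i j ≤ ∑ i, lam i * c i := by
  classical
  have hlin : IsLinearMap ℝ (fun N : Matrix (Fin n) (Fin n) ℝ => ∑ i, ∑ j, lam i * c j * N i j) := by
    constructor
    · intro x y
      simp [Matrix.add_apply, mul_add, Finset.sum_add_distrib]
    · intro r x
      simp [Matrix.smul_apply, Finset.mul_sum, smul_eq_mul]
      congr 1; funext i; congr 1; funext j; ring
  have hsub : {N | ∃ σ : Equiv.Perm (Fin n), σ.permMatrix ℝ = N} ⊆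
      {N | (fun N : Matrix (Fin n) (Fin n) ℝ => ∑ i, ∑ j, lam i * c j * N i j) N ≤ ∑ i, lam i * c i} := by
    rintro _ ⟨σ, rfl⟩
    have hkey : ∀ i, ∑ j, lam i * c j * (σ.permMatrix ℝ) i j = lam i * c (σ i) := by
      intro i
      rw [Finset.sum_eq_single (σ i)]
      · simp [Equiv.Perm.permMatrix, PEquiv.toMatrix_apply, Equiv.toPEquiv_apply]
      · intro b _ hb
        simp [Equiv.Perm.permMatrix, PEquiv.toMatrix_apply, Equiv.toPEquiv_apply, Ne.symm hb]
      · simp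
    simp only [Set.mem_setOf_eq]
    rw [Finset.sum_congr rfl (fun i _ => hkey i)]
    exact (hlam.monovary hcua).sum_smul_comp_perm_le_sum_smul
  have hmem : M ∈ convexHull ℝ {N | ∃ σ : Equiv.Perm (Fin n), σ.permMatrix ℝ = N} := by
    rwa [← doublyStochastic_eq_convexHull_permMatrix]
  exact convexHull_min hsub (convex_halfSpace_le hlin _) hmem

end aux

/-- Unconstrained LP over a flag manifold has a closed-form solution: with
`(A + Aᵀ)/2 = Q Λ Qᵀ` an eigenvalue decomposition with eigenvalues in decreasing order
and `c` the step vector of the flag parameters (in decreasing order), the maximum of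
`tr(AᵀX)` over `X ∈ Flag(k₁,…,k_p,n)` equals `∑ λᵢ cᵢ` and is attained at
`X = Q diag(c) Qᵀ`. -/
theorem stmt15 (p n : ℕ)
    (k : Fin (p + 2) → ℕ) (hk0 : k 0 = 0) (hkn : k (Fin.last (p + 1)) = n)
    (hkmono : StrictMono k)
    (a : Fin (p + 1) → ℝ) (ha : StrictAnti a)
    (c : Fin n → ℝ)
    (hc : ∀ (j : Fin (p + 1)) (i : Fin n),
      k j.castSucc ≤ (i : ℕ) → (i : ℕ) < k j.succ → c i = a j)
    (A : Matrix (Fin n) (Fin n) ℝ)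
    (Q : Matrix (Fin n) (Fin n) ℝ) (hQ : Qᵀ * Q = 1)
    (lam : Fin n → ℝ) (hlam : Antitone lam)
    (hdecomp : (1 / 2 : ℝ) • (A + Aᵀ) = Q * Matrix.diagonal lam * Qᵀ) :
    IsGreatest {y : ℝ | ∃ X : Matrix (Fin n) (Fin n) ℝ,
        (∃ R : Matrix (Fin n) (Fin n) ℝ, Rᵀ * R = 1 ∧
          X = R * Matrix.diagonal c * Rᵀ) ∧
        y = (Aᵀ * X).trace}
      (∑ i : Fin n, lam i * c i) ∧
    (Aᵀ * (Q * Matrix.diagonal c * Qᵀ)).trace = ∑ i : Fin n, lam i * c i := by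
  classical
  -- c is antitone
  have hcua : Antitone c := by
    intro i i' hii
    obtain ⟨j, hj1, hj2⟩ := aux_block p n k hk0 hkn i
    obtain ⟨j', hj1', hj2'⟩ := aux_block p n k hk0 hkn i'
    rw [hc j i hj1 hj2, hc j' i' hj1' hj2']
    have hlt : k j.castSucc < k j'.succ := lt_of_le_of_lt (le_trans hj1 hii) hj2'
    have hjj : j ≤ j' := by
      by_contra h
      push_neg at h
      have h2 : j'.succ ≤ j.castSucc := Fin.succ_le_castSucc_iff.mpr h
      have h3 := hkmono.monotone h2
      omega
    exact ha.antitone hjj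
  have hQQt : Q * Qᵀ = 1 := mul_eq_one_comm.mp hQ
  -- trace with symmetric X equals trace with S
  have htr : ∀ X : Matrix (Fin n) (Fin n) ℝ, Xᵀ = X →
      (Aᵀ * X).trace = ((Q * Matrix.diagonal lam * Qᵀ) * X).trace := by
    intro X hX
    rw [← hdecomp, Matrix.smul_mul, Matrix.trace_smul, Matrix.add_mul, Matrix.trace_add]
    have : (A * X).trace = (Aᵀ * X).trace := by
      conv_lhs => rw [← Matrix.trace_transpose, Matrix.transpose_mul, hX, Matrix.trace_mul_comm]
    rw [this]
    simp; ring
  -- attainment computation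
  have hmain : (Aᵀ * (Q * Matrix.diagonal c * Qᵀ)).trace = ∑ i : Fin n, lam i * c i := by
    rw [htr _ (by simp [Matrix.transpose_mul, Matrix.mul_assoc])]
    have : Q * Matrix.diagonal lam * Qᵀ * (Q * Matrix.diagonal c * Qᵀ)
        = Q * (Matrix.diagonal lam * Matrix.diagonal c) * Qᵀ := by
      rw [Matrix.mul_assoc (Q * Matrix.diagonal lam), ← Matrix.mul_assoc Qᵀ,
        ← Matrix.mul_assoc Qᵀ Q, hQ, Matrix.one_mul, ← Matrix.mul_assoc,
        Matrix.mul_assoc Q]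
    rw [this, Matrix.trace_mul_cycle, ← Matrix.mul_assoc, hQ, Matrix.one_mul,
      Matrix.diagonal_mul_diagonal, Matrix.trace_diagonal]
  refine ⟨⟨⟨Q * Matrix.diagonal c * Qᵀ, ⟨Q, hQ, rfl⟩, hmain.symm⟩, ?_⟩, hmain⟩
  -- upper bound
  rintro y ⟨X, ⟨R, hR, rfl⟩, rfl⟩
  have hRRt : R * Rᵀ = 1 := mul_eq_one_comm.mp hR
  set U : Matrix (Fin n) (Fin n) ℝ := Qᵀ * R with hU
  have hUtU : Uᵀ * U = 1 := by
    rw [hU, Matrix.transpose_mul, Matrix.transpose_transpose, Matrix.mul_assoc,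
      ← Matrix.mul_assoc Q, hQQt, Matrix.one_mul, hR]
  have hUUt : U * Uᵀ = 1 := mul_eq_one_comm.mp hUtU
  have hXsymm : (R * Matrix.diagonal c * Rᵀ)ᵀ = R * Matrix.diagonal c * Rᵀ := by
    simp [Matrix.transpose_mul, Matrix.mul_assoc]
  rw [htr _ hXsymm]
  have hrw : Q * Matrix.diagonal lam * Qᵀ * (R * Matrix.diagonal c * Rᵀ)
      = Q * (Matrix.diagonal lam * U * Matrix.diagonal c * Uᵀ) * Qᵀ := by
    rw [hU]
    simp only [Matrix.transpose_mul, Matrix.transpose_transpose]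
    simp only [← Matrix.mul_assoc]
    conv_rhs => rw [Matrix.mul_assoc, hQQt, Matrix.mul_one]
  rw [hrw, Matrix.trace_mul_cycle, ← Matrix.mul_assoc, hQ, Matrix.one_mul]
  have hexp : (Matrix.diagonal lam * U * Matrix.diagonal c * Uᵀ).trace
      = ∑ i, ∑ j, lam i * c j * (U i j * U i j) := by
    rw [Matrix.trace]
    congr 1; funext i
    rw [Matrix.diag_apply, Matrix.mul_apply]
    congr 1; funext j
    rw [Matrix.mul_diagonal, Matrix.diagonal_mul, Matrix.transpose_apply]
    ring
  rw [hexp]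
  refine aux_ds_le lam c hlam hcua (Matrix.of fun i j => U i j * U i j) ?_
  rw [mem_doublyStochastic_iff_sum]
  refine ⟨fun i j => mul_self_nonneg _, fun i => ?_, fun j => ?_⟩
  · have := congrFun (congrFun hUUt i) i
    simpa [Matrix.mul_apply, Matrix.one_apply] using this
  · have := congrFun (congrFun hUtU j) j
    simpa [Matrix.mul_apply, Matrix.one_apply] using this
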